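/- Let N be a sound deterministic negotiation and let u, t ∈ Act* with ut ∈ L(N) and t co-prime with minimal letter b. Then the configuration C reached by C_init →u C has exactly one enabled node n, and dnode(n) = dom(b). -/

import Mathlib

universe u v w

variable {P : Type u} {A : Type v}

/-- One swap of two adjacent independent letters. -/
def SwapStep (dom : A → Set P) (u v : List A) : Prop :=
  ∃ x y : List A, ∃ a b : A, dom a ∩ dom b = ∅ ∧
    u = x ++ a :: b :: y ∧ v = x ++ b :: a :: y

/-- Mazurkiewicz trace equivalence: reflexive-transitive-symmetric closure of swaps. -/
def TraceEq (dom : A → Set P) : List A → List A → Prop :=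
  Relation.EqvGen (SwapStep dom)

open Classical in
/-- Projection of a word on a process `p`: keep letters whose domain contains `p`. -/
noncomputable def proj (dom : A → Set P) (p : P) : List A → List A
  | [] => []
  | a :: w => if p ∈ dom a then a :: proj dom p w else proj dom p w

/-- A word `t` is co-prime with minimal letter `b` if every trace-equivalent word starts with `b`. -/
def CoPrime (dom : A → Set P) (t : List A) (b : A) : Prop :=
  ∀ v, TraceEq dom t v → ∃ v', v = b :: v'

/-- A `(b,p)`-step: `s = b·s'` is co-prime with minimal letter `b`, `p ∈ dom b`,
and `b` is the only letter of `s` involving `p`. -/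
def IsStep (dom : A → Set P) (s : List A) (b : A) (p : P) : Prop :=
  p ∈ dom b ∧ CoPrime dom s b ∧ ∃ s', s = b :: s' ∧ ∀ a ∈ s', p ∉ dom a

/-- A (deterministic) negotiation diagram. -/
structure Negotiation (P : Type u) (A : Type v) where
  Node : Type w
  dnode : Node → Set P
  ninit : Node
  nfin : Node
  tr : Node → A → P → Option Node

namespace Negotiation

/-- Well-formedness conditions of a negotiation diagram over distributed alphabet `dom`. -/
def WellFormed (N : Negotiation P A) (dom : A → Set P) : Prop :=
  (∀ n, (N.dnode n).Nonempty) ∧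
  N.dnode N.ninit = Set.univ ∧
  N.dnode N.nfin = Set.univ ∧
  (∀ n a p n', N.tr n a p = some n' →
    N.dnode n = dom a ∧ p ∈ dom a ∧ p ∈ N.dnode n' ∧
    ∀ q ∈ dom a, (N.tr n a q).isSome)

/-- Node `n` is enabled in configuration `C`. -/
def Enabled (N : Negotiation P A) (n : N.Node) (C : P → N.Node) : Prop :=
  ∀ p ∈ N.dnode n, C p = n

/-- `n` is the unique node enabled in `C`. -/
def UniqueEnabled (N : Negotiation P A) (n : N.Node) (C : P → N.Node) : Prop :=
  N.Enabled n C ∧ ∀ m, N.Enabled m C → m = n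

/-- A step of a negotiation on action `a` between configurations. -/
def Step (N : Negotiation P A) (dom : A → Set P) (C : P → N.Node) (a : A)
    (C' : P → N.Node) : Prop :=
  ∃ n, N.Enabled n C ∧ (∀ p ∈ dom a, N.tr n a p = some (C' p)) ∧
    ∀ p, p ∉ dom a → C' p = C p

/-- Execution of a word between configurations. -/
def Run (N : Negotiation P A) (dom : A → Set P) :
    (P → N.Node) → List A → (P → N.Node) → Prop
  | C, [], C' => C = C'
  | C, a :: word, C'' => ∃ C', N.Step dom C a C' ∧ N.Run dom C' word C''

/-- The initial configuration: all processes in the initial node. -/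
def Cinit (N : Negotiation P A) : P → N.Node := fun _ => N.ninit

/-- The final configuration: all processes in the final node. -/
def Cfin (N : Negotiation P A) : P → N.Node := fun _ => N.nfin

/-- The language of successful executions of `N`. -/
def Lang (N : Negotiation P A) (dom : A → Set P) (word : List A) : Prop :=
  N.Run dom N.Cinit word N.Cfin

/-- Soundness: every execution from the initial configuration extends to a successful one. -/
def Sound (N : Negotiation P A) (dom : A → Set P) : Prop :=
  ∀ word C, N.Run dom N.Cinit word C → ∃ v, N.Run dom C v N.Cfin

/-- A local path of process `p` in the graph of `N`. -/
def PPath (N : Negotiation P A) (p : P) : N.Node → List A → N.Node → Prop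
  | n, [], n' => n = n'
  | n, a :: word, n'' => ∃ n', N.tr n a p = some n' ∧ N.PPath p n' word n''

/-- A local path in the graph of `N`, labelled over the alphabet `A_dom` of pairs `(a,p)`. -/
def GPath (N : Negotiation P A) : N.Node → List (A × P) → N.Node → Prop
  | n, [], n' => n = n'
  | n, x :: word, n'' => ∃ n', N.tr n x.1 x.2 = some n' ∧ N.GPath n' word n''

/-- `Paths(N)`: labels of local paths from the initial to the final node. -/
def PathsL (N : Negotiation P A) : Set (List (A × P)) :=
  { w | N.GPath N.ninit w N.nfin }

end Negotiation

lemma traceEq_cons (dom : A → Set P) {u v : List A} (c : A)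
    (h : TraceEq dom u v) : TraceEq dom (c :: u) (c :: v) := by
  induction h with
  | rel x y hxy =>
      obtain ⟨x', y', a, b, hab, hx, hy⟩ := hxy
      exact Relation.EqvGen.rel _ _ ⟨c :: x', y', a, b, hab, by simp [hx], by simp [hy]⟩
  | refl x => exact Relation.EqvGen.refl _
  | symm x y _ ih => exact Relation.EqvGen.symm _ _ ih
  | trans x y z _ _ ih₁ ih₂ => exact Relation.EqvGen.trans _ _ _ ih₁ ih₂

lemma traceEq_bubble (dom : A → Set P) (a : A) :
    ∀ (w r : List A), (∀ c ∈ w, dom c ∩ dom a = ∅) →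
      TraceEq dom (w ++ a :: r) (a :: (w ++ r)) := by
  intro w
  induction w with
  | nil => intro r _; exact Relation.EqvGen.refl _
  | cons c w ih =>
      intro r hw
      have h1 : TraceEq dom (c :: (w ++ a :: r)) (c :: a :: (w ++ r)) :=
        traceEq_cons dom c (ih r fun d hd => hw d (List.mem_cons_of_mem _ hd))
      have h2 : TraceEq dom (c :: a :: (w ++ r)) (a :: c :: (w ++ r)) := by
        refine Relation.EqvGen.rel _ _ ⟨[], w ++ r, c, a, hw c List.mem_cons_self, ?_, ?_⟩ <;> simp
      exact Relation.EqvGen.trans _ _ _ h1 h2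

lemma step_det (dom : A → Set P) (hdom : ∀ a, (dom a).Nonempty)
    {N : Negotiation P A} (hWF : N.WellFormed dom)
    {C C₁ C₂ : P → N.Node} {a : A} (h₁ : N.Step dom C a C₁) (h₂ : N.Step dom C a C₂) :
    C₁ = C₂ := by
  obtain ⟨n₁, hE₁, ht₁, ho₁⟩ := h₁
  obtain ⟨n₂, hE₂, ht₂, ho₂⟩ := h₂
  obtain ⟨p, hp⟩ := hdom a
  have hd₁ : N.dnode n₁ = dom a := (hWF.2.2.2 _ _ _ _ (ht₁ p hp)).1
  have hd₂ : N.dnode n₂ = dom a := (hWF.2.2.2 _ _ _ _ (ht₂ p hp)).1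
  have hn : n₁ = n₂ := by
    have e₁ := hE₁ p (by rw [hd₁]; exact hp)
    have e₂ := hE₂ p (by rw [hd₂]; exact hp)
    rw [e₁] at e₂; exact e₂
  funext q
  by_cases hq : q ∈ dom a
  · have e₁ := ht₁ q hq
    have e₂ := ht₂ q hq
    rw [hn, e₂] at e₁
    exact (Option.some_injective _ e₁).symm
  · rw [ho₁ q hq, ho₂ q hq]

lemma run_det (dom : A → Set P) (hdom : ∀ a, (dom a).Nonempty)
    {N : Negotiation P A} (hWF : N.WellFormed dom) :
    ∀ (w : List A) (C C₁ C₂ : P → N.Node),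
      N.Run dom C w C₁ → N.Run dom C w C₂ → C₁ = C₂ := by
  intro w
  induction w with
  | nil => intro C C₁ C₂ h₁ h₂; exact h₁ ▸ h₂
  | cons a w ih =>
      intro C C₁ C₂ h₁ h₂
      obtain ⟨D₁, hs₁, hr₁⟩ := h₁
      obtain ⟨D₂, hs₂, hr₂⟩ := h₂
      have : D₁ = D₂ := step_det dom hdom hWF hs₁ hs₂
      subst this
      exact ih _ _ _ hr₁ hr₂

lemma run_append (dom : A → Set P) {N : Negotiation P A} :
    ∀ (u v : List A) (C C' : P → N.Node),
      N.Run dom C (u ++ v) C' → ∃ D, N.Run dom C u D ∧ N.Run dom D v C' := by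
  intro u
  induction u with
  | nil => intro v C C' h; exact ⟨C, rfl, h⟩
  | cons a u ih =>
      intro v C C' h
      obtain ⟨D, hs, hr⟩ := h
      obtain ⟨E, h1, h2⟩ := ih v D C' hr
      exact ⟨E, ⟨D, hs, h1⟩, h2⟩

lemma run_to_fin_cases (dom : A → Set P) (hdom : ∀ a, (dom a).Nonempty)
    {N : Negotiation P A} (hWF : N.WellFormed dom) :
    ∀ (s : List A) (C : P → N.Node) (m : N.Node),
      N.Enabled m C → N.Run dom C s N.Cfin →
      (∃ w a r, s = w ++ a :: r ∧ (∀ c ∈ w, dom c ∩ N.dnode m = ∅) ∧ dom a = N.dnode m)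
      ∨ (m = N.nfin ∧ ∀ a ∈ s, dom a ∩ N.dnode m = ∅) := by
  intro s
  induction s with
  | nil =>
      intro C m hE hr
      right
      refine ⟨?_, by simp⟩
      obtain ⟨p, hp⟩ := hWF.1 m
      have := hE p hp
      rw [hr] at this
      exact this.symm
  | cons a s ih =>
      intro C m hE hr
      obtain ⟨C', ⟨n, hEn, htr, hout⟩, hr'⟩ := hr
      obtain ⟨p, hp⟩ := hdom a
      have hdn : N.dnode n = dom a := (hWF.2.2.2 _ _ _ _ (htr p hp)).1
      by_cases hcap : (dom a ∩ N.dnode m).Nonempty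
      · obtain ⟨q, hq1, hq2⟩ := hcap
        have e1 : C q = n := hEn q (by rw [hdn]; exact hq1)
        have e2 : C q = m := hE q hq2
        have hnm : n = m := by rw [e1] at e2; exact e2
        left
        exact ⟨[], a, s, by simp, by simp, by rw [← hdn, hnm]⟩
      · have hdisj : dom a ∩ N.dnode m = ∅ :=
          Set.not_nonempty_iff_eq_empty.mp hcap
        have hE' : N.Enabled m C' := by
          intro q hq
          have hqa : q ∉ dom a := fun hqa =>
            Set.eq_empty_iff_forall_notMem.mp hdisj q ⟨hqa, hq⟩
          rw [hout q hqa]; exact hE q hq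
        rcases ih C' m hE' hr' with ⟨w, a', r, hs, hw, hda⟩ | ⟨hm, hall⟩
        · left
          exact ⟨a :: w, a', r, by rw [hs]; rfl,
            fun c hc => by
              rcases List.mem_cons.mp hc with rfl | hc
              · exact hdisj
              · exact hw c hc, hda⟩
        · right
          refine ⟨hm, fun c hc => ?_⟩
          rcases List.mem_cons.mp hc with rfl | hc
          · exact hdisj
          · exact hall c hc

/-- If `u·t ∈ L(N)` with `t` co-prime with minimal letter `b`, then the
configuration reached after `u` has exactly one enabled node `n`, with
`dnode n = dom b`. -/
theorem coprime_unique_enabled_node [Finite P] [Finite A] (dom : A → Set P)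
    (hdom : ∀ a, (dom a).Nonempty) (N : Negotiation P A) [Finite N.Node]
    (hWF : N.WellFormed dom) (hS : N.Sound dom)
    {u t : List A} {b : A}
    (hb : CoPrime dom t b) (h : N.Lang dom (u ++ t))
    {C : P → N.Node} (hC : N.Run dom N.Cinit u C) :
    ∃ n, N.Enabled n C ∧ (∀ m, N.Enabled m C → m = n) ∧ N.dnode n = dom b := by
  -- t starts with b
  obtain ⟨t', rfl⟩ := hb t (Relation.EqvGen.refl t)
  -- extract the run of t from C
  obtain ⟨D, hD, hDt⟩ := run_append dom u (b :: t') _ _ h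
  have hDC : D = C := run_det dom hdom hWF u _ _ _ hD hC
  rw [hDC] at hDt
  obtain ⟨C', ⟨n, hEn, htr, hout⟩, hr'⟩ := hDt
  obtain ⟨p, hp⟩ := hdom b
  have hdn : N.dnode n = dom b := (hWF.2.2.2 _ _ _ _ (htr p hp)).1
  refine ⟨n, hEn, ?_, hdn⟩
  intro m hEm
  by_contra hne
  rcases run_to_fin_cases dom hdom hWF (b :: t') C m hEm
      ⟨C', ⟨n, hEn, htr, hout⟩, hr'⟩ with ⟨w, a, r, hs, hw, hda⟩ | ⟨hm, hall⟩
  · -- a is movable to the front, so a = b; then dnode m = dom b = dnode n, contradiction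
    have hteq : TraceEq dom (b :: t') (a :: (w ++ r)) := by
      rw [hs]
      exact traceEq_bubble dom a w r (fun c hc => by rw [hda]; exact hw c hc)
    obtain ⟨v', hv'⟩ := hb _ hteq
    have hab : a = b := (List.cons_eq_cons.mp hv').1
    have hdm : N.dnode m = dom b := by rw [← hda, hab]
    have e1 : C p = m := hEm p (by rw [hdm]; exact hp)
    have e2 : C p = n := hEn p (by rw [hdn]; exact hp)
    exact hne (by rw [e1] at e2; exact e2)
  · -- m = nfin: dnode m = univ, contradicting disjointness with nonempty dom b
    have := hall b List.mem_cons_self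
    rw [hm, hWF.2.2.1] at this
    exact Set.eq_empty_iff_forall_notMem.mp this p ⟨hp, trivial⟩
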